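/- With c₁, c₂ > 0 and z₋(x₁,x₂) = A − √(A²−B) as above (A = (c₁²+c₂²)/2 + |τ(x₁)|² + |τ(x₂)|², B = (|τ(x₂)|² − |τ(x₁)|² − c₁c₂)²), one has min over (x₁,x₂) ∈ [0,2π)² of z₋(x₁,x₂) > 0 if and only if c₁c₂ > 4. -/

import Mathlib

open Real

noncomputable section

/-- `τ(x) = 1 + e^{ix}`. -/
def tau (x : ℝ) : ℂ := 1 + Complex.exp (x * Complex.I)

/-- `A = (c₁²+c₂²)/2 + |τ(x₁)|² + |τ(x₂)|²`. -/
def Aval (c₁ c₂ x₁ x₂ : ℝ) : ℝ :=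
  (c₁ ^ 2 + c₂ ^ 2) / 2 + ‖tau x₁‖ ^ 2 + ‖tau x₂‖ ^ 2

/-- `B = (|τ(x₂)|² − |τ(x₁)|² − c₁c₂)²`. -/
def Bval (c₁ c₂ x₁ x₂ : ℝ) : ℝ :=
  (‖tau x₂‖ ^ 2 - ‖tau x₁‖ ^ 2 - c₁ * c₂) ^ 2

/-- The lower root `z₋ = A − √(A²−B)`. -/
def zMinus (c₁ c₂ x₁ x₂ : ℝ) : ℝ :=
  Aval c₁ c₂ x₁ x₂ - Real.sqrt (Aval c₁ c₂ x₁ x₂ ^ 2 - Bval c₁ c₂ x₁ x₂)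

lemma abs_tau_sq (x : ℝ) : ‖tau x‖ ^ 2 = 2 + 2 * Real.cos x := by
  rw [Complex.sq_norm, tau, Complex.exp_mul_I]
  simp [Complex.normSq_apply, Complex.cos_ofReal_re, Complex.sin_ofReal_re]
  nlinarith [Real.sin_sq_add_cos_sq x]

lemma zMinus_nonneg (c₁ c₂ x₁ x₂ : ℝ) : 0 ≤ zMinus c₁ c₂ x₁ x₂ := by
  have hA : 0 ≤ Aval c₁ c₂ x₁ x₂ := by
    unfold Aval
    positivity
  have hB : 0 ≤ Bval c₁ c₂ x₁ x₂ := sq_nonneg _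
  have h1 : Real.sqrt (Aval c₁ c₂ x₁ x₂ ^ 2 - Bval c₁ c₂ x₁ x₂) ≤
      Real.sqrt (Aval c₁ c₂ x₁ x₂ ^ 2) := Real.sqrt_le_sqrt (by linarith)
  rw [Real.sqrt_sq hA] at h1
  unfold zMinus
  linarith

set_option maxHeartbeats 1000000 in
/-- The minimum of `z₋` over the torus is positive iff `c₁c₂ > 4`. -/
theorem min_zMinus_pos_iff (c₁ c₂ : ℝ) (hc₁ : 0 < c₁) (hc₂ : 0 < c₂) :
    0 < sInf {z : ℝ | ∃ x₁ ∈ Set.Ico (0 : ℝ) (2 * π), ∃ x₂ ∈ Set.Ico (0 : ℝ) (2 * π),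
        z = zMinus c₁ c₂ x₁ x₂} ↔ 4 < c₁ * c₂ := by
  set S := {z : ℝ | ∃ x₁ ∈ Set.Ico (0 : ℝ) (2 * π), ∃ x₂ ∈ Set.Ico (0 : ℝ) (2 * π),
        z = zMinus c₁ c₂ x₁ x₂} with hS
  have hbdd : BddBelow S := by
    refine ⟨0, ?_⟩
    rintro z ⟨x₁, -, x₂, -, rfl⟩
    exact zMinus_nonneg c₁ c₂ x₁ x₂
  constructor
  · -- 0 < sInf S → 4 < c₁c₂
    intro h
    by_contra hle
    push_neg at hle
    -- pick x₁ = π, x₂ = arccos (c₁c₂/2 - 1)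
    have hy1 : -1 ≤ c₁ * c₂ / 2 - 1 := by nlinarith
    have hy2 : c₁ * c₂ / 2 - 1 ≤ 1 := by linarith
    set x₂ := Real.arccos (c₁ * c₂ / 2 - 1) with hx₂
    have hcos : Real.cos x₂ = c₁ * c₂ / 2 - 1 := Real.cos_arccos hy1 hy2
    have hmem : zMinus c₁ c₂ π x₂ ∈ S := by
      refine ⟨π, ⟨Real.pi_nonneg, by linarith [Real.pi_pos]⟩, x₂,
        ⟨Real.arccos_nonneg _, ?_⟩, rfl⟩
      have := Real.arccos_le_pi (c₁ * c₂ / 2 - 1)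
      linarith [Real.pi_pos]
    have hBzero : Bval c₁ c₂ π x₂ = 0 := by
      unfold Bval
      rw [abs_tau_sq, abs_tau_sq, hcos, Real.cos_pi]
      ring
    have hAge : 0 ≤ Aval c₁ c₂ π x₂ := by unfold Aval; positivity
    have hz : zMinus c₁ c₂ π x₂ = 0 := by
      unfold zMinus
      rw [hBzero, sub_zero, Real.sqrt_sq hAge, sub_self]
    have := csInf_le hbdd hmem
    rw [hz] at this
    linarith
  · -- 4 < c₁c₂ → 0 < sInf S
    intro h
    set M : ℝ := (c₁ ^ 2 + c₂ ^ 2) / 2 + 8 with hM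
    have hM0 : 0 < M := by positivity
    set δ : ℝ := (c₁ * c₂ - 4) ^ 2 / (2 * M) with hδ
    have hδ0 : 0 < δ := by
      apply div_pos
      · nlinarith
      · linarith
    have hne : S.Nonempty := ⟨zMinus c₁ c₂ 0 0, 0, ⟨le_refl _, by linarith [Real.pi_pos]⟩,
      0, ⟨le_refl _, by linarith [Real.pi_pos]⟩, rfl⟩
    have hlow : ∀ z ∈ S, δ ≤ z := by
      rintro z ⟨x₁, -, x₂, -, rfl⟩
      have ht₁ := abs_tau_sq x₁
      have ht₂ := abs_tau_sq x₂
      have hc₁b := Real.neg_one_le_cos x₁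
      have hc₂b := Real.neg_one_le_cos x₂
      have hc₁t := Real.cos_le_one x₁
      have hc₂t := Real.cos_le_one x₂
      unfold zMinus
      set A := Aval c₁ c₂ x₁ x₂ with hA
      set B := Bval c₁ c₂ x₁ x₂ with hB
      have hA' : A = (c₁ ^ 2 + c₂ ^ 2) / 2 + (2 + 2 * Real.cos x₁) + (2 + 2 * Real.cos x₂) := by
        rw [hA]; unfold Aval; rw [ht₁, ht₂]
      have hB' : B = ((2 + 2 * Real.cos x₂) - (2 + 2 * Real.cos x₁) - c₁ * c₂) ^ 2 := by
        rw [hB]; unfold Bval; rw [ht₁, ht₂]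
      clear_value A B
      clear_value M δ
      have hAle : A ≤ M := by rw [hA', hM]; linarith
      have hA0 : 0 < A := by rw [hA']; nlinarith
      have hBge : (c₁ * c₂ - 4) ^ 2 ≤ B := by rw [hB']; nlinarith
      have h1 : 0 ≤ (c₁ ^ 2 + c₂ ^ 2) / 2 + 2 * (2 + 2 * Real.cos x₁) + c₁ * c₂ := by
        nlinarith
      have h2 : 0 ≤ (c₁ ^ 2 + c₂ ^ 2) / 2 + 2 * (2 + 2 * Real.cos x₂) - c₁ * c₂ := by
        nlinarith [sq_nonneg (c₁ - c₂)]
      have hBleA : B ≤ A ^ 2 := by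
        rw [hA', hB']
        have key : ((c₁ ^ 2 + c₂ ^ 2) / 2 + (2 + 2 * Real.cos x₁) + (2 + 2 * Real.cos x₂)) ^ 2
            - ((2 + 2 * Real.cos x₂) - (2 + 2 * Real.cos x₁) - c₁ * c₂) ^ 2
            = ((c₁ ^ 2 + c₂ ^ 2) / 2 + 2 * (2 + 2 * Real.cos x₁) + c₁ * c₂)
              * ((c₁ ^ 2 + c₂ ^ 2) / 2 + 2 * (2 + 2 * Real.cos x₂) - c₁ * c₂) := by ring
        linarith [mul_nonneg h1 h2]
      have h2Aδ : 2 * A * δ ≤ (c₁ * c₂ - 4) ^ 2 := by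
        have e : 2 * M * δ = (c₁ * c₂ - 4) ^ 2 := by rw [hδ]; field_simp
        nlinarith [hδ0.le]
      have hδA : δ ≤ A := by nlinarith [hδ0.le, sq_nonneg (c₁ * c₂ - 4)]
      have hsq : A ^ 2 - B ≤ (A - δ) ^ 2 := by nlinarith [sq_nonneg δ]
      have hs : Real.sqrt (A ^ 2 - B) ≤ A - δ := by
        calc Real.sqrt (A ^ 2 - B) ≤ Real.sqrt ((A - δ) ^ 2) := Real.sqrt_le_sqrt hsq
        _ = A - δ := Real.sqrt_sq (by linarith)
      linarith
    have := le_csInf hne hlow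
    linarith
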